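/- For every integer d ≥ 3, there is no polynomial in ℚ[x] of degree d that is (d−1)-superirreducible over ℚ. Equivalently: for every irreducible f ∈ ℚ[x] with deg f = d ≥ 3, there exists a nonconstant g ∈ ℚ[x] of degree at most d−1 such that f(g(x)) is not irreducible in ℚ[x]. -/

import Mathlib

set_option maxHeartbeats 1000000
set_option synthInstance.maxHeartbeats 200000

open Polynomial

/-- A polynomial `f ∈ R[x]` is `k`-superirreducible over `R` if it is irreducible and
`f(g(x))` is irreducible for every nonconstant `g ∈ R[x]` of degree at most `k`. -/
def IsSuperirreducible (R : Type*) [CommRing R] [IsDomain R] (k : ℕ) (f : Polynomial R) : Prop :=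
  Irreducible f ∧ ∀ g : Polynomial R, 0 < g.natDegree → g.natDegree ≤ k →
    Irreducible (f.comp g)

theorem no_superirreducible_of_degree_over_rat (d : ℕ) (hd : 3 ≤ d)
    (f : Polynomial ℚ) (hf : f.natDegree = d) :
    ¬ IsSuperirreducible ℚ (d - 1) f := by
  rintro ⟨hirr, hsup⟩
  haveI : Fact (Irreducible f) := ⟨hirr⟩
  have hf0 : f ≠ 0 := hirr.ne_zero
  set α : AdjoinRoot f := AdjoinRoot.root f with hα
  haveI hFD : FiniteDimensional ℚ (AdjoinRoot f) := (AdjoinRoot.powerBasis hf0).finite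
  have hrank : Module.finrank ℚ (AdjoinRoot f) = d := by
    rw [(AdjoinRoot.powerBasis hf0).finrank]
    simpa using hf
  have hαint : IsIntegral ℚ α := AdjoinRoot.isIntegral_root hf0
  have hminα : minpoly ℚ α = f * C f.leadingCoeff⁻¹ := AdjoinRoot.minpoly_root hf0
  have hminαdeg : (minpoly ℚ α).natDegree = d := by
    rw [hminα, natDegree_mul hf0 (by simp [leadingCoeff_eq_zero, hf0]), natDegree_C, add_zero, hf]
  have haevalα : aeval α f = 0 := by
    rw [hα]; exact (AdjoinRoot.aeval_eq f).trans AdjoinRoot.mk_self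
  -- choose c with f(-c-α) ≠ 0
  obtain ⟨c, hc⟩ : ∃ c : ℚ, aeval (-(algebraMap ℚ (AdjoinRoot f) c) - α) f ≠ 0 := by
    set R : Polynomial (AdjoinRoot f) := (f.map (algebraMap ℚ (AdjoinRoot f))).comp (C (-α) - X) with hR
    have hR0 : R ≠ 0 := by
      have h1 : (C (-α) - X).natDegree = 1 := by compute_degree!
      have : R.natDegree = d := by
        rw [hR, natDegree_comp, natDegree_map, hf, h1, mul_one]
      intro h0
      rw [h0, natDegree_zero] at this
      omega
    have hs : (Set.range (algebraMap ℚ (AdjoinRoot f))).Infinite :=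
      Set.infinite_range_of_injective (algebraMap ℚ (AdjoinRoot f)).injective
    obtain ⟨a, ⟨c, rfl⟩, ha⟩ := hs.exists_notMem_finset R.roots.toFinset
    refine ⟨c, fun h => ha ?_⟩
    rw [Multiset.mem_toFinset, mem_roots hR0]
    have : (-α - algebraMap ℚ (AdjoinRoot f) c) = (-(algebraMap ℚ (AdjoinRoot f) c) - α) := by ring
    rw [IsRoot, hR, eval_comp]
    simp only [eval_sub, eval_C, eval_X, eval_map, ← aeval_def, this, h]
  set β : AdjoinRoot f := α ^ 2 + algebraMap ℚ (AdjoinRoot f) c * α with hβ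
  have hβint : IsIntegral ℚ β := Algebra.IsIntegral.isIntegral β
  set F := IntermediateField.adjoin ℚ ({β} : Set (AdjoinRoot f)) with hF
  have hβF : β ∈ F := IntermediateField.mem_adjoin_simple_self ℚ β
  have hαF : α ∈ F := by
    by_contra hαF
    have hαintF : IsIntegral F α := hαint.tower_top
    set p : Polynomial F := X ^ 2 + C (algebraMap ℚ F c) * X - C ⟨β, hβF⟩ with hp
    have hpmonic : p.Monic := by
      have hq : p = X ^ 2 - (C ⟨β, hβF⟩ - C (algebraMap ℚ F c) * X) := by rw [hp]; ring
      rw [hq]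
      refine monic_X_pow_sub ?_
      refine (degree_sub_le _ _).trans_lt (max_lt ?_ ?_)
      · exact degree_C_le.trans_lt (by norm_num)
      · calc (C (algebraMap ℚ F c) * X).degree ≤ (C (algebraMap ℚ F c)).degree + X.degree :=
              degree_mul_le _ _
          _ ≤ 0 + 1 := add_le_add degree_C_le degree_X_le
          _ < 2 := by norm_num
    have hpdeg : p.natDegree = 2 := by rw [hp]; compute_degree!
    have hproot : aeval α p = 0 := by
      rw [hp]
      simp only [map_sub, map_add, map_mul, map_pow, aeval_X, aeval_C]
      have h1 : algebraMap F (AdjoinRoot f) ⟨β, hβF⟩ = β := rfl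
      have h2 : algebraMap F (AdjoinRoot f) (algebraMap ℚ F c) = algebraMap ℚ (AdjoinRoot f) c :=
        (IsScalarTower.algebraMap_apply ℚ F (AdjoinRoot f) c).symm
      rw [h1, h2, hβ]; ring
    have hdvd : minpoly F α ∣ p := minpoly.dvd F α hproot
    have h2le : 2 ≤ (minpoly F α).natDegree := by
      rw [minpoly.two_le_natDegree_iff hαintF]
      rintro ⟨y, hy⟩
      exact hαF (hy ▸ y.2)
    have hpeq : p = minpoly F α :=
      eq_of_monic_of_dvd_of_natDegree_le (minpoly.monic hαintF) hpmonic hdvd (hpdeg ▸ h2le)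
    -- the other root -c-α
    set α' : AdjoinRoot f := -(algebraMap ℚ (AdjoinRoot f) c) - α with hα'
    have hproot' : aeval α' p = 0 := by
      rw [hp]
      simp only [map_sub, map_add, map_mul, map_pow, aeval_X, aeval_C]
      have h1 : algebraMap F (AdjoinRoot f) ⟨β, hβF⟩ = β := rfl
      have h2 : algebraMap F (AdjoinRoot f) (algebraMap ℚ F c) = algebraMap ℚ (AdjoinRoot f) c :=
        (IsScalarTower.algebraMap_apply ℚ F (AdjoinRoot f) c).symm
      rw [h1, h2, hβ, hα']; ring
    have hdvd2 : minpoly F α ∣ (minpoly ℚ α).map (algebraMap ℚ F) :=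
      minpoly.dvd_map_of_isScalarTower ℚ F α
    obtain ⟨t, ht⟩ := hdvd2
    have hmα' : aeval α' (minpoly ℚ α) = 0 := by
      have : aeval α' ((minpoly ℚ α).map (algebraMap ℚ F)) = 0 := by
        rw [ht, map_mul, ← hpeq, hproot', zero_mul]
      rwa [aeval_map_algebraMap] at this
    have hdvdf : minpoly ℚ α ∣ f := minpoly.dvd ℚ α haevalα
    have hmap := map_dvd (aeval α') hdvdf
    rw [hmα'] at hmap
    exact hc (zero_dvd_iff.mp hmap)
  -- get polynomial g with g(β) = α
  have hαadj : α ∈ Algebra.adjoin ℚ ({β} : Set (AdjoinRoot f)) := by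
    rw [← IntermediateField.adjoin_simple_toSubalgebra_of_isAlgebraic hβint.isAlgebraic]
    exact hαF
  rw [Algebra.adjoin_singleton_eq_range_aeval] at hαadj
  obtain ⟨g, hg⟩ := hαadj
  have hβmonic : (minpoly ℚ β).Monic := minpoly.monic hβint
  have hβdegpos : 0 < (minpoly ℚ β).natDegree := minpoly.natDegree_pos hβint
  set g' : Polynomial ℚ := g %ₘ minpoly ℚ β with hg'
  have hg'eval : aeval β g' = α := by
    have heq := modByMonic_eq_sub_mul_div g (minpoly ℚ β)
    rw [hg', heq, map_sub, map_mul, minpoly.aeval ℚ β, zero_mul, sub_zero]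
    exact hg
  have hg'deg : g'.natDegree < (minpoly ℚ β).natDegree :=
    natDegree_modByMonic_lt g hβmonic (fun h => by rw [h, natDegree_one] at hβdegpos; omega)
  have hβdegle : (minpoly ℚ β).natDegree ≤ d := hrank ▸ minpoly.natDegree_le β
  set m := g'.natDegree with hm
  -- m ≥ 2
  have hm2 : 2 ≤ m := by
    set q : Polynomial ℚ := g'.comp (X ^ 2 + C c * X) - X with hq
    have hhdeg : (X ^ 2 + C c * X : Polynomial ℚ).natDegree = 2 := by compute_degree!
    have hqroot : aeval α q = 0 := by
      rw [hq, map_sub, aeval_comp, aeval_X]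
      have : aeval α (X ^ 2 + C c * X : Polynomial ℚ) = β := by
        rw [hβ]; simp only [map_add, map_mul, map_pow, aeval_X, aeval_C]
      rw [this, hg'eval, sub_self]
    have hq0 : q ≠ 0 := by
      intro h0
      have : g'.comp (X ^ 2 + C c * X) = X := by
        have := sub_eq_zero.mp (hq ▸ h0)
        exact this
      have hdeg := congrArg natDegree this
      rw [natDegree_comp, hhdeg, natDegree_X] at hdeg
      omega
    have hdvdq : minpoly ℚ α ∣ q := minpoly.dvd ℚ α hqroot
    have hle := natDegree_le_of_dvd hdvdq hq0
    have hqle : q.natDegree ≤ max (m * 2) 1 := by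
      rw [hq]
      refine (natDegree_sub_le _ _).trans ?_
      rw [natDegree_comp, hhdeg, natDegree_X]
    rw [hminαdeg] at hle
    have := hle.trans hqle
    rcases le_or_gt (m * 2) 1 with h | h
    · simp [max_eq_right h] at this; omega
    · rw [max_eq_left h.le] at this; omega
  -- final contradiction
  have hirrcomp := hsup g' (by omega) (by omega)
  have hdvdc : minpoly ℚ β ∣ f.comp g' := by
    refine minpoly.dvd ℚ β ?_
    rw [aeval_comp, hg'eval, haevalα]
  obtain ⟨t, ht⟩ := hdvdc
  rcases hirrcomp.isUnit_or_isUnit ht with hu | hu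
  · have := natDegree_eq_zero_of_isUnit hu
    omega
  · have htdeg := natDegree_eq_zero_of_isUnit hu
    have ht0 : t ≠ 0 := fun h => by simp [h] at ht; exact (hirrcomp.ne_zero ht)
    have hcompdeg : (f.comp g').natDegree = d * m := by
      rw [natDegree_comp, hf]
    rw [ht, natDegree_mul (minpoly.ne_zero hβint) ht0, htdeg, add_zero] at hcompdeg
    have : d * 2 ≤ d * m := Nat.mul_le_mul_left d hm2
    omega
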